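/- Let X be a locally finite tree and fix a vertex x₀. For a discrete subgroup Γ ≤ Aut(X), define its stabilizer growth function by h_Γ(k) = max{ |Γ_v| : v a vertex with d(v,x₀) ≤ k } and, for a prime p, its p-stabilizer growth function by h_Γ^p(k) = max{ |Γ_v|_p : v a vertex with d(v,x₀) ≤ k }. If Γ and Γ' are lattices in Aut(X) that are commensurable in Aut(X), then h_Γ ≃ h_{Γ'}, and h_Γ^p ≃ h_{Γ'}^p for every prime p. -/

import Mathlib

open SimpleGraph MulAction
open scoped ENNReal

universe u

variable {V : Type u}

/-- The automorphism group of a simple graph, as a subgroup of the permutation group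
of its vertex set. -/
def SimpleGraph.autGroup (G : SimpleGraph V) : Subgroup (Equiv.Perm V) where
  carrier := {f | ∀ u v : V, G.Adj (f u) (f v) ↔ G.Adj u v}
  one_mem' := by intro u v; simp
  mul_mem' := by
    intro a b ha hb u v
    simp only [Set.mem_setOf_eq, Equiv.Perm.mul_apply] at *
    rw [ha, hb]
  inv_mem' := by
    intro a ha u v
    simpa using (ha (a⁻¹ u) (a⁻¹ v)).symm

/-- A subgroup of the permutation group of the vertices is discrete if all vertex
stabilizers are finite. -/
def IsDiscreteSubgroup (Γ : Subgroup (Equiv.Perm V)) : Prop :=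
  ∀ v : V, Finite (stabilizer Γ v)

/-- The `S`-covolume of a subgroup `Γ` of the permutation group of the vertices:
the sum of `1 / |Γ_v|` over the `Γ`-orbits meeting `S` (for `Γ`-invariant `S`, the
orbits contained in `S`), where `v` is a representative of the orbit. -/
noncomputable def covolume (Γ : Subgroup (Equiv.Perm V)) (S : Set V) : ℝ≥0∞ :=
  ∑' O : {O : Quotient (orbitRel Γ V) // Quotient.out O ∈ S},
    ((Nat.card (stabilizer Γ (Quotient.out (O : Quotient (orbitRel Γ V))))) : ℝ≥0∞)⁻¹

/-- A lattice: a discrete subgroup with finite covolume with respect to the set of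
all vertices. -/
def IsGraphLattice (Γ : Subgroup (Equiv.Perm V)) : Prop :=
  IsDiscreteSubgroup Γ ∧ covolume Γ Set.univ ≠ ⊤

/-- A nonuniform lattice: a lattice with infinitely many orbits of vertices. -/
def IsNonuniformLattice (Γ : Subgroup (Equiv.Perm V)) : Prop :=
  IsGraphLattice Γ ∧ Infinite (Quotient (orbitRel Γ V))

/-- `f ⪯ g` : there are `a, b` with `f k ≤ a * g (k + b)` for all `k`. -/
def GrowthLE (f g : ℕ → ℕ) : Prop :=
  ∃ a b : ℕ, ∀ k : ℕ, f k ≤ a * g (k + b)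

/-- Equivalence of growth types. -/
def GrowthEquiv (f g : ℕ → ℕ) : Prop :=
  GrowthLE f g ∧ GrowthLE g f

/-- The number of `Γ`-orbits of vertices meeting the ball of radius `k` about `x₀`. -/
noncomputable def quotientGrowth (G : SimpleGraph V) (Γ : Subgroup (Equiv.Perm V))
    (x₀ : V) (k : ℕ) : ℕ :=
  Nat.card {O : Quotient (orbitRel Γ V) //
    ∃ v : V, Quotient.mk (orbitRel Γ V) v = O ∧ G.dist v x₀ ≤ k}

/-- The maximal order of a `Γ`-stabilizer of a vertex in the ball of radius `k`
about `x₀`. -/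
noncomputable def stabilizerGrowth (G : SimpleGraph V) (Γ : Subgroup (Equiv.Perm V))
    (x₀ : V) (k : ℕ) : ℕ :=
  sSup {c : ℕ | ∃ v : V, G.dist v x₀ ≤ k ∧ c = Nat.card (stabilizer Γ v)}

/-- The `p`-order of a (finite) group order `k` : the largest power of `p` dividing `k`. -/
def pOrder (p k : ℕ) : ℕ := p ^ (k.factorization p)

/-- The maximal `p`-order of a `Γ`-stabilizer of a vertex in the ball of radius `k`
about `x₀`. -/
noncomputable def pStabilizerGrowth (G : SimpleGraph V) (Γ : Subgroup (Equiv.Perm V))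
    (p : ℕ) (x₀ : V) (k : ℕ) : ℕ :=
  sSup {c : ℕ | ∃ v : V, G.dist v x₀ ≤ k ∧ c = pOrder p (Nat.card (stabilizer Γ v))}

/-- `Γ` and `Γ'` are commensurable in (a subgroup) `A` of the permutation group:
some `A`-conjugate of `Γ` intersects `Γ'` in finite index in both. -/
def CommensurableIn {GG : Type u} [Group GG] (A Γ Γ' : Subgroup GG) : Prop :=
  ∃ g ∈ A, Subgroup.Commensurable (Subgroup.map (MulAut.conj g).toMonoidHom Γ) Γ'

/-- An `(m,n)`-biregular tree with parts `V₀`, `V₁`. -/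
structure IsBiregularTree (G : SimpleGraph V) (V₀ V₁ : Set V) (m n : ℕ) : Prop where
  connected : G.Connected
  acyclic : G.IsAcyclic
  disjoint : Disjoint V₀ V₁
  union : V₀ ∪ V₁ = Set.univ
  adj_parts : ∀ ⦃u v : V⦄, G.Adj u v → (u ∈ V₀ ∧ v ∈ V₁) ∨ (u ∈ V₁ ∧ v ∈ V₀)
  degree₀ : ∀ v ∈ V₀, (G.neighborSet v).Finite ∧ (G.neighborSet v).ncard = m
  degree₁ : ∀ v ∈ V₁, (G.neighborSet v).Finite ∧ (G.neighborSet v).ncard = n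

/-- A star tree of degree `m` with parts `V₀`, `V₁`. -/
structure IsStarTree (A : SimpleGraph V) (V₀ V₁ : Set V) (m : ℕ) : Prop where
  connected : A.Connected
  acyclic : A.IsAcyclic
  disjoint : Disjoint V₀ V₁
  union : V₀ ∪ V₁ = Set.univ
  adj_parts : ∀ ⦃u v : V⦄, A.Adj u v → (u ∈ V₀ ∧ v ∈ V₁) ∨ (u ∈ V₁ ∧ v ∈ V₀)
  degree₀ : ∀ v ∈ V₀, (A.neighborSet v).Finite ∧ (A.neighborSet v).ncard = m
  degree₁ : ∀ v ∈ V₁, (A.neighborSet v).Finite ∧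
    ((A.neighborSet v).ncard = 1 ∨ (A.neighborSet v).ncard = 2)

/-- The quotient graph `Γ\X`: vertices are `Γ`-orbits; two distinct orbits are
adjacent iff some vertex of one is adjacent to some vertex of the other. -/
def quotientGraph (G : SimpleGraph V) (Γ : Subgroup (Equiv.Perm V)) :
    SimpleGraph (Quotient (orbitRel Γ V)) where
  Adj O O' := O ≠ O' ∧ ∃ u v : V, Quotient.mk (orbitRel Γ V) u = O ∧
    Quotient.mk (orbitRel Γ V) v = O' ∧ G.Adj u v
  symm := ⟨by
    rintro O O' ⟨hne, u, v, hu, hv, huv⟩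
    exact ⟨hne.symm, v, u, hv, hu, huv.symm⟩⟩
  loopless := ⟨fun O h => h.1 rfl⟩

/-- An acceptable quotient growth function. -/
structure AcceptableGrowth (f : ℕ → ℕ) : Prop where
  base : f 0 = 1
  one_le : ∀ j : ℕ, 1 ≤ f (j + 1)
  le_two_mul : ∀ j : ℕ, f (j + 1) ≤ 2 * f j
  summable : Summable fun j : ℕ => (f j : ℝ) / 2 ^ j

/-- An `n`-admissible sequence `s`, indexed by `k ≥ 1`. -/
def NAdmissible (n : ℕ) (s : ℕ → ℕ) : Prop :=
  ∀ k : ℕ, 1 ≤ k → s k ∣ n ∧ 2 < s k ∧ s k ≤ n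

/-- The associated function `h j = (s 1 - 1) * ⋯ * (s j - 1)`, with `h 0 = 1`. -/
def admProd (s : ℕ → ℕ) (j : ℕ) : ℕ := ∏ i ∈ Finset.Icc 1 j, (s i - 1)


section Statement10Aux

variable {V : Type u}

private lemma aux_dist_le (G : SimpleGraph V) (hconn : G.Connected) {f : Equiv.Perm V}
    (hf : f ∈ G.autGroup) (u v : V) :
    G.dist (f u) (f v) ≤ G.dist u v := by
  have hf' : ∀ a b : V, G.Adj (f a) (f b) ↔ G.Adj a b := hf
  obtain ⟨p, hp⟩ := hconn.exists_walk_length_eq_dist u v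
  calc G.dist (f u) (f v)
      ≤ (p.map (⟨f, fun {a b} hab => (hf' a b).mpr hab⟩ : G →g G)).length :=
        SimpleGraph.dist_le _
    _ = p.length := SimpleGraph.Walk.length_map _ _
    _ = G.dist u v := hp

private lemma aux_dist_map (G : SimpleGraph V) (hconn : G.Connected) {g : Equiv.Perm V}
    (hg : g ∈ G.autGroup) (u v : V) :
    G.dist (g u) (g v) = G.dist u v := by
  refine le_antisymm (aux_dist_le G hconn hg u v) ?_
  have h := aux_dist_le G hconn (G.autGroup.inv_mem hg) (g u) (g v)
  simpa using h

private lemma aux_ball_finite (G : SimpleGraph V) (hconn : G.Connected)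
    (hlf : ∀ v : V, (G.neighborSet v).Finite) (x₀ : V) (k : ℕ) :
    {v : V | G.dist v x₀ ≤ k}.Finite := by
  induction k with
  | zero =>
    refine Set.Finite.subset (Set.finite_singleton x₀) fun v hv => ?_
    simp only [Set.mem_setOf_eq, Nat.le_zero] at hv
    simp [hconn.dist_eq_zero_iff.mp hv]
  | succ k ih =>
    refine Set.Finite.subset
      (ih.union (Set.Finite.biUnion ih fun u _ => hlf u)) fun v hv => ?_
    simp only [Set.mem_setOf_eq] at hv
    rcases le_or_gt (G.dist v x₀) k with h | h
    · exact Or.inl h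
    · have hd : G.dist v x₀ = k + 1 := le_antisymm hv h
      have hne : G.dist v x₀ ≠ 0 := by omega
      obtain ⟨p, hp⟩ := SimpleGraph.exists_walk_of_dist_ne_zero hne
      cases p with
      | nil => rw [hd] at hp; simp at hp
      | @cons _ u _ hadj q =>
        have h1 : G.dist u x₀ ≤ q.length := SimpleGraph.dist_le q
        simp only [SimpleGraph.Walk.length_cons, hd] at hp
        have hu : u ∈ {w : V | G.dist w x₀ ≤ k} := by
          simp only [Set.mem_setOf_eq]; omega
        exact Or.inr (Set.mem_biUnion hu hadj.symm)

private def conjStabEquiv (g : Equiv.Perm V) (Γ : Subgroup (Equiv.Perm V)) (v : V) :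
    MulAction.stabilizer (Subgroup.map (MulAut.conj g).toMonoidHom Γ) v ≃
      MulAction.stabilizer Γ (g⁻¹ v) where
  toFun x :=
    ⟨⟨g⁻¹ * x.1.1 * g, by
        have hx := x.1.2
        rw [Subgroup.mem_map_equiv] at hx
        simpa using hx⟩, by
      have hfix : x.1.1 v = v := x.2
      rw [MulAction.mem_stabilizer_iff]
      show (g⁻¹ * x.1.1 * g) • (g⁻¹ v) = g⁻¹ v
      simp [Equiv.Perm.smul_def, Equiv.Perm.mul_apply, hfix]⟩
  invFun y :=
    ⟨⟨g * y.1.1 * g⁻¹, by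
        rw [Subgroup.mem_map_equiv]
        simpa [mul_assoc] using y.1.2⟩, by
      have hfix : y.1.1 (g⁻¹ v) = g⁻¹ v := y.2
      rw [MulAction.mem_stabilizer_iff]
      show (g * y.1.1 * g⁻¹) • v = v
      simp only [Equiv.Perm.smul_def, Equiv.Perm.mul_apply, hfix]; simp⟩
  left_inv x := Subtype.ext (Subtype.ext (by group))
  right_inv y := Subtype.ext (Subtype.ext (by group))

private lemma stab_card_le (A B : Subgroup (Equiv.Perm V)) (v : V)
    (hA : Finite (MulAction.stabilizer A v)) (hB : Finite (MulAction.stabilizer B v))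
    (hn : A.relIndex B ≠ 0) :
    Nat.card (MulAction.stabilizer B v) ≤
        A.relIndex B * Nat.card (MulAction.stabilizer A v) ∧
      ∀ p : ℕ, p.Prime → pOrder p (Nat.card (MulAction.stabilizer B v)) ≤
        A.relIndex B * pOrder p (Nat.card (MulAction.stabilizer A v)) := by
  classical
  set K : Subgroup B := MulAction.stabilizer B v with hK
  set M : Subgroup B := A.subgroupOf B with hM
  set H : Subgroup B := M ⊓ K with hH
  have hmemA : ∀ x : H, x.1.1 ∈ A := fun x =>
    Subgroup.mem_subgroupOf.mp (Subgroup.mem_inf.mp x.2).1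
  have hfix : ∀ x : H, x.1.1 v = v := fun x => (Subgroup.mem_inf.mp x.2).2
  let j : H →* MulAction.stabilizer A v :=
    { toFun := fun x => ⟨⟨x.1.1, hmemA x⟩, by
        rw [MulAction.mem_stabilizer_iff]
        show x.1.1 • v = v
        simpa [Equiv.Perm.smul_def] using hfix x⟩
      map_one' := rfl
      map_mul' := fun x y => rfl }
  have hinj : Function.Injective j := fun x y hxy =>
    Subtype.ext (Subtype.ext (congrArg (fun z : MulAction.stabilizer A v => z.1.1) hxy))
  have hdvd : Nat.card H ∣ Nat.card (MulAction.stabilizer A v) :=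
    Subgroup.card_dvd_of_injective j hinj
  have hKcard : Nat.card H * (H.subgroupOf K).index = Nat.card K := by
    have h := Subgroup.card_mul_index (H.subgroupOf K)
    rwa [Nat.card_congr (Subgroup.subgroupOfEquivOfLe (inf_le_right : H ≤ K)).toEquiv] at h
  have hidx : (H.subgroupOf K).index ≤ A.relIndex B := by
    have h1 : M.relIndex ⊤ ≠ 0 := by
      rwa [Subgroup.relIndex_top_right]
    have h2 := Subgroup.relIndex_le_of_le_right (le_top : K ≤ ⊤) h1
    rw [Subgroup.relIndex_top_right] at h2
    calc (H.subgroupOf K).index = H.relIndex K := rfl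
      _ = M.relIndex K := by rw [hH, Subgroup.inf_relIndex_right]
      _ ≤ M.index := h2
      _ = A.relIndex B := rfl
  haveI : Finite K := hB
  have hK0 : Nat.card K ≠ 0 := Nat.card_pos.ne'
  have hH0 : Nat.card H ≠ 0 := fun h => hK0 (by rw [← hKcard, h, zero_mul])
  have hi0 : (H.subgroupOf K).index ≠ 0 := fun h => hK0 (by rw [← hKcard, h, mul_zero])
  haveI : Finite (MulAction.stabilizer A v) := hA
  have hA0 : Nat.card (MulAction.stabilizer A v) ≠ 0 := Nat.card_pos.ne'
  constructor
  · calc Nat.card K = Nat.card H * (H.subgroupOf K).index := hKcard.symm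
      _ ≤ Nat.card (MulAction.stabilizer A v) * (A.relIndex B) :=
        Nat.mul_le_mul (Nat.le_of_dvd (Nat.pos_of_ne_zero hA0) hdvd) hidx
      _ = A.relIndex B * Nat.card (MulAction.stabilizer A v) := mul_comm _ _
  · intro p hp
    have hfac : (Nat.card K).factorization p =
        (Nat.card H).factorization p + ((H.subgroupOf K).index).factorization p := by
      rw [← hKcard, Nat.factorization_mul hH0 hi0, Finsupp.add_apply]
    have hb1 : p ^ ((Nat.card H).factorization p) ≤
        p ^ ((Nat.card (MulAction.stabilizer A v)).factorization p) :=
      Nat.pow_le_pow_right hp.one_lt.le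
        ((Nat.factorization_le_iff_dvd hH0 hA0).mpr hdvd p)
    have hb2 : p ^ (((H.subgroupOf K).index).factorization p) ≤ (H.subgroupOf K).index :=
      Nat.ordProj_le p hi0
    calc pOrder p (Nat.card K)
        = p ^ ((Nat.card H).factorization p) * p ^ (((H.subgroupOf K).index).factorization p) := by
          rw [pOrder, hfac, pow_add]
      _ ≤ p ^ ((Nat.card (MulAction.stabilizer A v)).factorization p) * (A.relIndex B) :=
          Nat.mul_le_mul hb1 (hb2.trans hidx)
      _ = A.relIndex B * pOrder p (Nat.card (MulAction.stabilizer A v)) := by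
          rw [pOrder]; ring

private lemma growthLE_aux (G : SimpleGraph V) (hconn : G.Connected)
    (hlf : ∀ v : V, (G.neighborSet v).Finite) (x₀ : V) (F F' : V → ℕ) (c b : ℕ)
    (h : ∀ v : V, ∃ w : V, G.dist w x₀ ≤ G.dist v x₀ + b ∧ F v ≤ c * F' w) :
    GrowthLE (fun k => sSup {n : ℕ | ∃ v : V, G.dist v x₀ ≤ k ∧ n = F v})
      (fun k => sSup {n : ℕ | ∃ v : V, G.dist v x₀ ≤ k ∧ n = F' v}) := by
  refine ⟨c, b, fun k => ?_⟩
  have hT : BddAbove {n : ℕ | ∃ v : V, G.dist v x₀ ≤ k + b ∧ n = F' v} := by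
    refine Set.Finite.bddAbove (Set.Finite.subset
      ((aux_ball_finite G hconn hlf x₀ (k + b)).image F') ?_)
    rintro n ⟨v, hv, rfl⟩
    exact ⟨v, hv, rfl⟩
  refine csSup_le ⟨F x₀, x₀, by simp [SimpleGraph.dist_self], rfl⟩ ?_
  rintro n ⟨v, hv, rfl⟩
  obtain ⟨w, hw, hle⟩ := h v
  refine hle.trans (Nat.mul_le_mul_left c (le_csSup hT ⟨w, ?_, rfl⟩))
  omega

end Statement10Aux

/-- If `X` is a locally finite tree and `Γ, Γ'` are commensurable
lattices in `Aut X`, then their stabilizer growth functions are equivalent, and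
for every prime `p` their `p`-stabilizer growth functions are equivalent. -/
theorem statement10 {V : Type u} (G : SimpleGraph V)
    (hconn : G.Connected) (hacyc : G.IsAcyclic)
    (hlf : ∀ v : V, (G.neighborSet v).Finite) (x₀ : V)
    (Γ Γ' : Subgroup (Equiv.Perm V))
    (hΓ : Γ ≤ G.autGroup) (hΓ' : Γ' ≤ G.autGroup)
    (hlat : IsGraphLattice Γ) (hlat' : IsGraphLattice Γ')
    (hcomm : CommensurableIn G.autGroup Γ Γ') :
    GrowthEquiv (fun k => stabilizerGrowth G Γ x₀ k)
      (fun k => stabilizerGrowth G Γ' x₀ k) ∧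
    ∀ p : ℕ, p.Prime →
      GrowthEquiv (fun k => pStabilizerGrowth G Γ p x₀ k)
        (fun k => pStabilizerGrowth G Γ' p x₀ k) := by
  obtain ⟨g, hg, hcm⟩ := hcomm
  obtain ⟨hn₁, hn₂⟩ := hcm
  have hdisc : ∀ v : V, Finite (stabilizer Γ v) := hlat.1
  have hdisc' : ∀ v : V, Finite (stabilizer Γ' v) := hlat'.1
  have hΘfin : ∀ v : V, Finite (stabilizer (Subgroup.map (MulAut.conj g).toMonoidHom Γ) v) :=
    fun v => by
      haveI := hdisc (g⁻¹ v)
      exact Finite.of_equiv _ (conjStabEquiv g Γ v).symm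
  have hΘcard : ∀ v : V, Nat.card (stabilizer (Subgroup.map (MulAut.conj g).toMonoidHom Γ) v)
      = Nat.card (stabilizer Γ (g⁻¹ v)) := fun v => Nat.card_congr (conjStabEquiv g Γ v)
  have hginv : ∀ v : V, G.dist (g⁻¹ v) x₀ ≤ G.dist v x₀ + G.dist (g⁻¹ x₀) x₀ := fun v => by
    have h1 : G.dist (g⁻¹ v) (g⁻¹ x₀) = G.dist v x₀ :=
      aux_dist_map G hconn (G.autGroup.inv_mem hg) v x₀
    have h2 := hconn.dist_triangle (u := g⁻¹ v) (v := g⁻¹ x₀) (w := x₀)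
    omega
  have hgfwd : ∀ v : V, G.dist (g v) x₀ ≤ G.dist v x₀ + G.dist (g x₀) x₀ := fun v => by
    have h1 : G.dist (g v) (g x₀) = G.dist v x₀ := aux_dist_map G hconn hg v x₀
    have h2 := hconn.dist_triangle (u := g v) (v := g x₀) (w := x₀)
    omega
  refine ⟨⟨?_, ?_⟩, fun p hp => ⟨?_, ?_⟩⟩
  · have key : ∀ v : V, ∃ w : V, G.dist w x₀ ≤ G.dist v x₀ + G.dist (g x₀) x₀ ∧
        Nat.card (stabilizer Γ v) ≤
          Γ'.relIndex (Subgroup.map (MulAut.conj g).toMonoidHom Γ) *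
            Nat.card (stabilizer Γ' w) := fun v => by
      refine ⟨g v, hgfwd v, ?_⟩
      have h := (stab_card_le Γ' (Subgroup.map (MulAut.conj g).toMonoidHom Γ) (g v)
        (hdisc' (g v)) (hΘfin (g v)) hn₂).1
      have h2 := hΘcard (g v)
      rw [Equiv.Perm.inv_def, Equiv.symm_apply_apply] at h2
      omega
    exact growthLE_aux G hconn hlf x₀ (fun v => Nat.card (stabilizer Γ v))
      (fun v => Nat.card (stabilizer Γ' v)) _ _ key
  · have key : ∀ v : V, ∃ w : V, G.dist w x₀ ≤ G.dist v x₀ + G.dist (g⁻¹ x₀) x₀ ∧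
        Nat.card (stabilizer Γ' v) ≤
          (Subgroup.map (MulAut.conj g).toMonoidHom Γ).relIndex Γ' *
            Nat.card (stabilizer Γ w) := fun v => by
      refine ⟨g⁻¹ v, hginv v, ?_⟩
      have h := (stab_card_le (Subgroup.map (MulAut.conj g).toMonoidHom Γ) Γ' v
        (hΘfin v) (hdisc' v) hn₁).1
      rw [hΘcard v] at h
      exact h
    exact growthLE_aux G hconn hlf x₀ (fun v => Nat.card (stabilizer Γ' v))
      (fun v => Nat.card (stabilizer Γ v)) _ _ key
  · have key : ∀ v : V, ∃ w : V, G.dist w x₀ ≤ G.dist v x₀ + G.dist (g x₀) x₀ ∧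
        pOrder p (Nat.card (stabilizer Γ v)) ≤
          Γ'.relIndex (Subgroup.map (MulAut.conj g).toMonoidHom Γ) *
            pOrder p (Nat.card (stabilizer Γ' w)) := fun v => by
      refine ⟨g v, hgfwd v, ?_⟩
      have h := (stab_card_le Γ' (Subgroup.map (MulAut.conj g).toMonoidHom Γ) (g v)
        (hdisc' (g v)) (hΘfin (g v)) hn₂).2 p hp
      have h2 := hΘcard (g v)
      rw [Equiv.Perm.inv_def, Equiv.symm_apply_apply] at h2
      rw [h2] at h
      exact h
    exact growthLE_aux G hconn hlf x₀ (fun v => pOrder p (Nat.card (stabilizer Γ v)))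
      (fun v => pOrder p (Nat.card (stabilizer Γ' v))) _ _ key
  · have key : ∀ v : V, ∃ w : V, G.dist w x₀ ≤ G.dist v x₀ + G.dist (g⁻¹ x₀) x₀ ∧
        pOrder p (Nat.card (stabilizer Γ' v)) ≤
          (Subgroup.map (MulAut.conj g).toMonoidHom Γ).relIndex Γ' *
            pOrder p (Nat.card (stabilizer Γ w)) := fun v => by
      refine ⟨g⁻¹ v, hginv v, ?_⟩
      have h := (stab_card_le (Subgroup.map (MulAut.conj g).toMonoidHom Γ) Γ' v
        (hΘfin v) (hdisc' v) hn₁).2 p hp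
      rw [hΘcard v] at h
      exact h
    exact growthLE_aux G hconn hlf x₀ (fun v => pOrder p (Nat.card (stabilizer Γ' v)))
      (fun v => pOrder p (Nat.card (stabilizer Γ v))) _ _ key
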